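/- Let β > 0. For every solution of the delayed Hegselmann–Krause system, all indices i, j and all t ≥ 2τ, one has |x_j(t−τ) − x_i(t−σ)| ≤ d_x(t−τ) + ∫_{t−τ}^{t−σ} d_x(s−τ) ds + β^{−1} e^{2τ} F(t−σ). -/

import Mathlib

open scoped BigOperators
open MeasureTheory

/-- Diameter of the agent configuration at time `t`. -/
noncomputable def hkDiam {N d : ℕ} (x : Fin N → ℝ → EuclideanSpace ℝ (Fin d)) (t : ℝ) : ℝ :=
  ⨆ i : Fin N, ⨆ j : Fin N, ‖x i t - x j t‖

/-- Maximum of the norms of the derivatives at time `t`. -/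
noncomputable def hkMaxDer {N d : ℕ} (x' : Fin N → ℝ → EuclideanSpace ℝ (Fin d)) (t : ℝ) : ℝ :=
  ⨆ i : Fin N, ‖x' i t‖

/-- Minimal communication rate `a̲(t) = min_{i ≠ j} ψ(|x_i(t-σ) - x_j(t-τ)|)/(N-1)`. -/
noncomputable def hkAMin {N d : ℕ} (ψ : ℝ → ℝ) (σ τ : ℝ)
    (x : Fin N → ℝ → EuclideanSpace ℝ (Fin d)) (t : ℝ) : ℝ :=
  ⨅ p : {p : Fin N × Fin N // p.1 ≠ p.2},
    ψ ‖x p.val.1 (t - σ) - x p.val.2 (t - τ)‖ / (N - 1)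


/-- Lyapunov–Krasovskii functional
`F(t) = d_x(t) + β ∫_{max(0,t-2τ)}^t e^{-(t-s)} ∫_s^t max_i |ẋ_i(r)| dr ds`. -/
noncomputable def hkF {N d : ℕ} (β τ : ℝ)
    (x x' : Fin N → ℝ → EuclideanSpace ℝ (Fin d)) (t : ℝ) : ℝ :=
  hkDiam x t +
    β * ∫ s in (max 0 (t - 2 * τ))..t, Real.exp (-(t - s)) * ∫ r in s..t, hkMaxDer x' r

theorem stmt_6
    (N d : ℕ) (hN : 2 ≤ N) (hd : 1 ≤ d)
    (σ τ : ℝ) (hσ : 0 ≤ σ) (hστ : σ ≤ τ) (hτ : 0 < τ)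
    (β : ℝ) (hβ : 0 < β)
    (ψ : ℝ → ℝ)
    (hψpos : ∀ s, 0 ≤ s → 0 < ψ s)
    (hψcont : ContinuousOn ψ (Set.Ici 0))
    (hψmono : ∀ s t, 0 ≤ s → s ≤ t → ψ t ≤ ψ s)
    (hψbdd : ∀ s, 0 ≤ s → ψ s ≤ 1)
    (x x' : Fin N → ℝ → EuclideanSpace ℝ (Fin d))
    (hxc : ∀ i, ContinuousOn (x i) (Set.Ici (-τ)))
    (hder : ∀ i, ∀ t > (0:ℝ), HasDerivAt (x i) (x' i t) t)
    (hode : ∀ i, ∀ t > (0:ℝ),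
      x' i t = ∑ j ∈ Finset.univ.erase i,
        (ψ ‖x i (t - σ) - x j (t - τ)‖ / (N - 1)) • (x j (t - τ) - x i (t - σ))) :
    ∀ (i j : Fin N), ∀ t, 2 * τ ≤ t →
      ‖x j (t - τ) - x i (t - σ)‖ ≤ hkDiam x (t - τ)
        + (∫ s in (t - τ)..(t - σ), hkDiam x (s - τ))
        + β⁻¹ * Real.exp (2 * τ) * hkF β τ x x' (t - σ) := by
  intro i j t ht
  haveI : Nonempty (Fin N) := ⟨⟨0, by omega⟩⟩
  have hN1 : (1:ℝ) ≤ (N:ℝ) - 1 := by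
    have : (2:ℝ) ≤ (N:ℝ) := by exact_mod_cast hN
    linarith
  have hN1pos : (0:ℝ) < (N:ℝ) - 1 := by linarith
  -- the ODE right-hand side, as a function defined everywhere
  set E : Fin N → ℝ → EuclideanSpace ℝ (Fin d) := fun k s =>
    ∑ l ∈ Finset.univ.erase k,
      (ψ ‖x k (s - σ) - x l (s - τ)‖ / (N - 1)) • (x l (s - τ) - x k (s - σ)) with hE
  set c : ℝ → ℝ := fun s => ⨆ k, ‖E k s‖ with hcdef
  -- continuity of each shifted trajectory
  have hxshift : ∀ (k : Fin N) (δ : ℝ), 0 ≤ δ → δ ≤ τ →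
      ContinuousOn (fun s => x k (s - δ)) (Set.Ici 0) := by
    intro k δ hδ0 hδτ
    apply (hxc k).comp (continuous_sub_right δ).continuousOn
    intro s hs
    simp only [Set.mem_Ici] at hs ⊢
    linarith
  have hEcont : ∀ k, ContinuousOn (E k) (Set.Ici 0) := by
    intro k
    apply continuousOn_finset_sum
    intro l hl
    apply ContinuousOn.smul (f := fun a => ψ ‖x k (a - σ) - x l (a - τ)‖ / ((N:ℝ) - 1))
      (g := fun a => x l (a - τ) - x k (a - σ))
    · apply ContinuousOn.div_const
      apply hψcont.comp (((hxshift k σ hσ hστ).sub (hxshift l τ hτ.le le_rfl)).norm)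
      intro s _; exact norm_nonneg _
    · exact (hxshift l τ hτ.le le_rfl).sub (hxshift k σ hσ hστ)
  have hccont : ContinuousOn c (Set.Ici 0) := by
    have : c = fun s => Finset.univ.sup' Finset.univ_nonempty (fun k => ‖E k s‖) := by
      funext s; rw [Finset.sup'_univ_eq_ciSup]
    rw [this]
    exact ContinuousOn.finset_sup'_apply Finset.univ_nonempty
      (fun k _ => (hEcont k).norm)
  have hbddE : ∀ s, BddAbove (Set.range fun k => ‖E k s‖) :=
    fun s => (Set.finite_range _).bddAbove
  have hle_c : ∀ k s, ‖E k s‖ ≤ c s := fun k s => le_ciSup (hbddE s) k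
  have hc0 : ∀ s, 0 ≤ c s := fun s => (norm_nonneg _).trans (hle_c ⟨0, by omega⟩ s)
  have hx'E : ∀ k s, 0 < s → x' k s = E k s := fun k s hs => hode k s hs
  -- diameter: pair bound and continuity
  have hpair : ∀ (k l : Fin N) (u : ℝ), ‖x k u - x l u‖ ≤ hkDiam x u := by
    intro k l u
    have h1 : ‖x k u - x l u‖ ≤ ⨆ l', ‖x k u - x l' u‖ :=
      le_ciSup (f := fun l' => ‖x k u - x l' u‖) ((Set.finite_range _).bddAbove) l
    exact h1.trans (le_ciSup (f := fun k' => ⨆ l', ‖x k' u - x l' u‖)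
      ((Set.finite_range _).bddAbove) k)
  have hD0 : ∀ u, 0 ≤ hkDiam x u := fun u =>
    (norm_nonneg (x ⟨0, by omega⟩ u - x ⟨0, by omega⟩ u)).trans (hpair _ _ u)
  have hDcont : ContinuousOn (hkDiam x) (Set.Ici (-τ)) := by
    have h1 : ∀ k : Fin N, ContinuousOn (fun u => ⨆ l, ‖x k u - x l u‖) (Set.Ici (-τ)) := by
      intro k
      have : (fun u => ⨆ l, ‖x k u - x l u‖)
          = fun u => Finset.univ.sup' Finset.univ_nonempty (fun l => ‖x k u - x l u‖) := by
        funext u; rw [Finset.sup'_univ_eq_ciSup]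
      rw [this]
      exact ContinuousOn.finset_sup'_apply Finset.univ_nonempty
        (fun l _ => ((hxc k).sub (hxc l)).norm)
    have : hkDiam x = fun u => Finset.univ.sup' Finset.univ_nonempty
        (fun k => ⨆ l, ‖x k u - x l u‖) := by
      funext u; rw [Finset.sup'_univ_eq_ciSup]; rfl
    rw [this]
    exact ContinuousOn.finset_sup'_apply Finset.univ_nonempty (fun k _ => h1 k)
  -- interval integrability of c on subintervals of [0,∞)
  have hcint : ∀ a b : ℝ, 0 ≤ a → a ≤ b → IntervalIntegrable c volume a b := by
    intro a b ha hab
    exact ContinuousOn.intervalIntegrable_of_Icc hab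
      (hccont.mono (fun s hs => le_trans ha hs.1))
  -- FTC estimate
  have hFTC : ∀ (k : Fin N) (a b : ℝ), 0 ≤ a → a ≤ b →
      ‖x k b - x k a‖ ≤ ∫ r in a..b, c r := by
    intro k a b ha hab
    have hEi : IntervalIntegrable (E k) volume a b :=
      ContinuousOn.intervalIntegrable_of_Icc hab
        ((hEcont k).mono (fun s hs => le_trans ha hs.1))
    have haeq : ∀ᵐ r ∂(volume.restrict (Set.uIoc a b)), E k r = x' k r := by
      filter_upwards [ae_restrict_mem measurableSet_uIoc] with r hr
      rw [Set.uIoc_of_le hab] at hr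
      exact (hx'E k r (lt_of_le_of_lt ha hr.1)).symm
    have hx'i : IntervalIntegrable (x' k) volume a b := hEi.congr_ae haeq
    have heq : ∫ r in a..b, x' k r = x k b - x k a := by
      apply intervalIntegral.integral_eq_sub_of_hasDeriv_right_of_le hab
      · exact (hxc k).mono (fun s hs => le_trans (by linarith) hs.1)
      · intro r hr
        exact (hder k r (lt_of_le_of_lt ha hr.1)).hasDerivWithinAt
      · exact hx'i
    rw [← heq]
    have heq2 : ∫ r in a..b, x' k r = ∫ r in a..b, E k r := by
      apply intervalIntegral.integral_congr_ae
      filter_upwards with r hr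
      rw [Set.uIoc_of_le hab] at hr
      exact hx'E k r (lt_of_le_of_lt ha hr.1)
    rw [heq2]
    calc ‖∫ r in a..b, E k r‖ ≤ ∫ r in a..b, ‖E k r‖ :=
          intervalIntegral.norm_integral_le_integral_norm hab
      _ ≤ ∫ r in a..b, c r := by
          apply intervalIntegral.integral_mono_on hab hEi.norm (hcint a b ha hab)
          intro r _; exact hle_c k r
  -- set up the main quantities
  set T : ℝ := t - σ with hT
  set a₁ : ℝ := t - τ with ha₁
  have h2τ : 0 ≤ t - 2 * τ := by linarith
  have ha₁0 : 0 < a₁ := by simp only [ha₁]; linarith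
  have ha₁T : a₁ ≤ T := by simp only [ha₁, hT]; linarith
  have hT0 : 0 < T := lt_of_lt_of_le ha₁0 ha₁T
  set G : ℝ → ℝ := fun u => ∫ r in u..T, c r with hG
  have hc0T : IntegrableOn c (Set.uIcc 0 T) volume := by
    rw [Set.uIcc_of_le hT0.le]
    exact (hccont.mono (fun s hs => hs.1)).integrableOn_Icc
  have hGcont : ContinuousOn G (Set.Icc 0 T) := by
    have := intervalIntegral.continuousOn_primitive_interval_left (a := 0) (b := T)
      (f := c) (μ := volume) hc0T
    rwa [Set.uIcc_of_le hT0.le] at this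
  have hG0 : ∀ u, 0 ≤ u → u ≤ T → 0 ≤ G u := by
    intro u hu huT
    exact intervalIntegral.integral_nonneg huT (fun r _ => hc0 r)
  -- key pointwise bound
  have hkey : ∀ s ∈ Set.Icc a₁ T, c s ≤ hkDiam x (s - τ) + G (s - τ) := by
    intro s hs
    obtain ⟨hs1, hs2⟩ := hs
    have hsτ0 : (0:ℝ) ≤ s - τ := by simp only [ha₁] at hs1; linarith
    have hsστ : s - τ ≤ s - σ := by linarith
    have hsσT : s - σ ≤ T := by simp only [hT] at hs2 ⊢; linarith
    have step1 : c s ≤ hkDiam x (s - τ) + ∫ r in (s-τ)..(s-σ), c r := by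
      apply ciSup_le
      intro k
      have hterm : ∀ l ∈ Finset.univ.erase k,
          ‖(ψ ‖x k (s - σ) - x l (s - τ)‖ / ((N:ℝ) - 1)) • (x l (s - τ) - x k (s - σ))‖
            ≤ (1 / ((N:ℝ) - 1)) * (hkDiam x (s - τ) + ∫ r in (s-τ)..(s-σ), c r) := by
        intro l _
        rw [norm_smul]
        have hψarg : (0:ℝ) ≤ ‖x k (s - σ) - x l (s - τ)‖ := norm_nonneg _
        have hw0 : 0 ≤ ψ ‖x k (s - σ) - x l (s - τ)‖ / ((N:ℝ) - 1) :=
          div_nonneg (hψpos _ hψarg).le (by linarith)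
        have hw1 : ψ ‖x k (s - σ) - x l (s - τ)‖ / ((N:ℝ) - 1) ≤ 1 / ((N:ℝ) - 1) := by
          gcongr
          exact hψbdd _ hψarg
        have hv : ‖x l (s - τ) - x k (s - σ)‖
            ≤ hkDiam x (s - τ) + ∫ r in (s-τ)..(s-σ), c r := by
          have hsplit : x l (s - τ) - x k (s - σ)
              = (x l (s - τ) - x k (s - τ)) + (x k (s - τ) - x k (s - σ)) := by abel
          calc ‖x l (s - τ) - x k (s - σ)‖
              ≤ ‖x l (s - τ) - x k (s - τ)‖ + ‖x k (s - τ) - x k (s - σ)‖ := by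
                rw [hsplit]; exact norm_add_le _ _
            _ ≤ hkDiam x (s - τ) + ∫ r in (s-τ)..(s-σ), c r := by
                apply add_le_add (hpair l k _)
                rw [norm_sub_rev]
                exact hFTC k (s - τ) (s - σ) hsτ0 hsστ
        have := mul_le_mul hw1 hv (norm_nonneg _) (by positivity)
        calc ‖ψ ‖x k (s - σ) - x l (s - τ)‖ / ((N:ℝ) - 1)‖ * ‖x l (s - τ) - x k (s - σ)‖
            = (ψ ‖x k (s - σ) - x l (s - τ)‖ / ((N:ℝ) - 1)) * ‖x l (s - τ) - x k (s - σ)‖ := by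
              rw [Real.norm_eq_abs, abs_of_nonneg hw0]
          _ ≤ _ := this
      calc ‖E k s‖ ≤ ∑ l ∈ Finset.univ.erase k,
            ‖(ψ ‖x k (s - σ) - x l (s - τ)‖ / ((N:ℝ) - 1)) • (x l (s - τ) - x k (s - σ))‖ :=
            norm_sum_le _ _
        _ ≤ ∑ _l ∈ Finset.univ.erase k,
            (1 / ((N:ℝ) - 1)) * (hkDiam x (s - τ) + ∫ r in (s-τ)..(s-σ), c r) :=
            Finset.sum_le_sum hterm
        _ = ((N:ℝ) - 1) * ((1 / ((N:ℝ) - 1)) * (hkDiam x (s - τ) + ∫ r in (s-τ)..(s-σ), c r)) := by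
            rw [Finset.sum_const, Finset.card_erase_of_mem (Finset.mem_univ k),
              Finset.card_univ, Fintype.card_fin, nsmul_eq_mul, Nat.cast_sub (by omega),
              Nat.cast_one]
        _ = hkDiam x (s - τ) + ∫ r in (s-τ)..(s-σ), c r := by
            rw [← mul_assoc, mul_one_div, div_self hN1pos.ne', one_mul]
    have step2 : (∫ r in (s-τ)..(s-σ), c r) ≤ G (s - τ) := by
      have h1 : IntervalIntegrable c volume (s-τ) (s-σ) := hcint _ _ hsτ0 hsστ
      have h2 : IntervalIntegrable c volume (s-σ) T := hcint _ _ (by linarith) hsσT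
      have : G (s - τ) = (∫ r in (s-τ)..(s-σ), c r) + ∫ r in (s-σ)..T, c r :=
        (intervalIntegral.integral_add_adjacent_intervals h1 h2).symm
      rw [this]
      have : 0 ≤ ∫ r in (s-σ)..T, c r :=
        intervalIntegral.integral_nonneg hsσT (fun r _ => hc0 r)
      linarith
    linarith
  -- continuity of s ↦ hkDiam x (s - τ) and s ↦ G (s - τ) on [a₁, T]
  have hDτcont : ContinuousOn (fun s => hkDiam x (s - τ)) (Set.Icc a₁ T) := by
    apply hDcont.comp (continuous_sub_right τ).continuousOn
    intro s hs
    have h1 := hs.1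
    simp only [ha₁] at h1
    have : s - τ ∈ Set.Ici (-τ) := Set.mem_Ici.mpr (by linarith)
    exact this
  have hGτcont : ContinuousOn (fun s => G (s - τ)) (Set.Icc a₁ T) := by
    apply hGcont.comp (continuous_sub_right τ).continuousOn
    intro s hs
    obtain ⟨h1, h2⟩ := hs
    simp only [ha₁] at h1
    have : s - τ ∈ Set.Icc 0 T := Set.mem_Icc.mpr ⟨by linarith, by linarith⟩
    exact this
  have hDτint : IntervalIntegrable (fun s => hkDiam x (s - τ)) volume a₁ T :=
    ContinuousOn.intervalIntegrable_of_Icc ha₁T hDτcont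
  have hGτint : IntervalIntegrable (fun s => G (s - τ)) volume a₁ T :=
    ContinuousOn.intervalIntegrable_of_Icc ha₁T hGτcont
  -- step I : ∫ c ≤ ∫ D(s-τ) + ∫ G(s-τ)
  have stepI : (∫ s in a₁..T, c s)
      ≤ (∫ s in a₁..T, hkDiam x (s - τ)) + ∫ s in a₁..T, G (s - τ) := by
    have h1 : (∫ s in a₁..T, c s) ≤ ∫ s in a₁..T, (hkDiam x (s - τ) + G (s - τ)) :=
      intervalIntegral.integral_mono_on ha₁T (hcint _ _ ha₁0.le ha₁T)
        (hDτint.add hGτint) hkey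
    rwa [intervalIntegral.integral_add hDτint hGτint] at h1
  -- step II : change of variables
  have stepII : (∫ s in a₁..T, G (s - τ)) = ∫ u in (a₁ - τ)..(T - τ), G u :=
    intervalIntegral.integral_comp_sub_right G τ
  -- step III/IV : exponential weight
  have ha₁τ0 : (0:ℝ) ≤ a₁ - τ := by simp only [ha₁]; linarith
  have hTτ : a₁ - τ ≤ T - τ := by linarith
  have hTτT : T - τ ≤ T := by linarith
  have hwcont : ContinuousOn (fun u => Real.exp (-(T - u)) * G u) (Set.Icc 0 T) := by
    apply ContinuousOn.mul _ hGcont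
    exact (Real.continuous_exp.comp ((continuous_const.sub continuous_id).neg)).continuousOn
  have hw0' : ∀ u ∈ Set.Icc (0:ℝ) T, 0 ≤ Real.exp (-(T - u)) * G u := by
    intro u hu
    exact mul_nonneg (Real.exp_pos _).le (hG0 u hu.1 hu.2)
  have stepIII : (∫ u in (a₁ - τ)..(T - τ), G u)
      ≤ Real.exp (2 * τ) * ∫ u in (a₁ - τ)..(T - τ), Real.exp (-(T - u)) * G u := by
    rw [← intervalIntegral.integral_const_mul]
    apply intervalIntegral.integral_mono_on hTτ
    · exact ContinuousOn.intervalIntegrable_of_Icc hTτ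
        (hGcont.mono (fun u hu => ⟨le_trans ha₁τ0 hu.1, le_trans hu.2 hTτT⟩))
    · exact ContinuousOn.intervalIntegrable_of_Icc hTτ
        ((continuousOn_const.mul hwcont).mono
          (fun u hu => ⟨le_trans ha₁τ0 hu.1, le_trans hu.2 hTτT⟩))
    · intro u hu
      have hu0 : (0:ℝ) ≤ u := le_trans ha₁τ0 hu.1
      have huT : u ≤ T := le_trans hu.2 hTτT
      have hexp : (1:ℝ) ≤ Real.exp (2 * τ) * Real.exp (-(T - u)) := by
        rw [← Real.exp_add]
        have : (0:ℝ) ≤ 2 * τ + -(T - u) := by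
          have := hu.1
          simp only [ha₁, hT] at this ⊢
          linarith
        calc (1:ℝ) = Real.exp 0 := Real.exp_zero.symm
          _ ≤ Real.exp (2 * τ + -(T - u)) := Real.exp_le_exp.mpr this
      calc G u = 1 * G u := (one_mul _).symm
        _ ≤ (Real.exp (2 * τ) * Real.exp (-(T - u))) * G u :=
            mul_le_mul_of_nonneg_right hexp (hG0 u hu0 huT)
        _ = Real.exp (2 * τ) * (Real.exp (-(T - u)) * G u) := by ring
  -- step V : enlarge the integration interval
  set m : ℝ := max 0 (T - 2 * τ) with hm
  have hm0 : (0:ℝ) ≤ m := le_max_left _ _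
  have hmle : m ≤ a₁ - τ := by
    apply max_le
    · exact ha₁τ0
    · simp only [ha₁, hT]; linarith
  have hwint : ∀ a b : ℝ, 0 ≤ a → a ≤ b → b ≤ T →
      IntervalIntegrable (fun u => Real.exp (-(T - u)) * G u) volume a b := by
    intro a b ha hab hbT
    exact ContinuousOn.intervalIntegrable_of_Icc hab
      (hwcont.mono (fun u hu => ⟨le_trans ha hu.1, le_trans hu.2 hbT⟩))
  have stepV : (∫ u in (a₁ - τ)..(T - τ), Real.exp (-(T - u)) * G u)
      ≤ ∫ u in m..T, Real.exp (-(T - u)) * G u := by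
    have e1 : (∫ u in m..T, Real.exp (-(T - u)) * G u)
        = (∫ u in m..(a₁ - τ), Real.exp (-(T - u)) * G u)
          + ((∫ u in (a₁ - τ)..(T - τ), Real.exp (-(T - u)) * G u)
            + ∫ u in (T - τ)..T, Real.exp (-(T - u)) * G u) := by
      rw [intervalIntegral.integral_add_adjacent_intervals
        (hwint _ _ ha₁τ0 hTτ (by linarith))
        (hwint _ _ (by linarith) hTτT le_rfl),
        intervalIntegral.integral_add_adjacent_intervals
        (hwint _ _ hm0 hmle (by linarith))
        (hwint _ _ ha₁τ0 (by linarith) le_rfl)]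
    have n1 : 0 ≤ ∫ u in m..(a₁ - τ), Real.exp (-(T - u)) * G u :=
      intervalIntegral.integral_nonneg hmle
        (fun u hu => hw0' u ⟨le_trans hm0 hu.1, le_trans hu.2 (by linarith)⟩)
    have n2 : 0 ≤ ∫ u in (T - τ)..T, Real.exp (-(T - u)) * G u :=
      intervalIntegral.integral_nonneg hTτT
        (fun u hu => hw0' u ⟨le_trans (by linarith : (0:ℝ) ≤ T - τ) hu.1, hu.2⟩)
    linarith
  -- identification with the functional F
  have hFid : hkF β τ x x' T
      = hkDiam x T + β * ∫ u in m..T, Real.exp (-(T - u)) * G u := by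
    rw [hkF]
    congr 1
    congr 1
    apply intervalIntegral.integral_congr
    intro s hs
    rw [Set.uIcc_of_le (by linarith : m ≤ T)] at hs
    have hs0 : (0:ℝ) ≤ s := le_trans hm0 hs.1
    have hsT : s ≤ T := hs.2
    simp only []
    congr 1
    apply intervalIntegral.integral_congr_ae
    filter_upwards with r hr
    rw [Set.uIoc_of_le hsT] at hr
    have hr0 : (0:ℝ) < r := lt_of_le_of_lt hs0 hr.1
    rw [hkMaxDer, hcdef]
    exact iSup_congr (fun k => by rw [hx'E k r hr0])
  -- combine the integral estimates
  have hmain : (∫ s in a₁..T, c s)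
      ≤ (∫ s in a₁..T, hkDiam x (s - τ)) + β⁻¹ * Real.exp (2 * τ) * hkF β τ x x' T := by
    have hFineq : Real.exp (2 * τ) * (∫ u in m..T, Real.exp (-(T - u)) * G u)
        ≤ β⁻¹ * Real.exp (2 * τ) * hkF β τ x x' T := by
      have hint0 : 0 ≤ ∫ u in m..T, Real.exp (-(T - u)) * G u :=
        intervalIntegral.integral_nonneg (by linarith)
          (fun u hu => hw0' u ⟨le_trans hm0 hu.1, hu.2⟩)
      have : hkF β τ x x' T ≥ β * ∫ u in m..T, Real.exp (-(T - u)) * G u := by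
        rw [hFid]
        have := hD0 T
        linarith
      calc Real.exp (2 * τ) * (∫ u in m..T, Real.exp (-(T - u)) * G u)
          = β⁻¹ * Real.exp (2 * τ) * (β * ∫ u in m..T, Real.exp (-(T - u)) * G u) := by
            field_simp
        _ ≤ β⁻¹ * Real.exp (2 * τ) * hkF β τ x x' T := by
            apply mul_le_mul_of_nonneg_left this
            positivity
    calc (∫ s in a₁..T, c s)
        ≤ (∫ s in a₁..T, hkDiam x (s - τ)) + ∫ s in a₁..T, G (s - τ) := stepI
      _ = (∫ s in a₁..T, hkDiam x (s - τ)) + ∫ u in (a₁ - τ)..(T - τ), G u := by rw [stepII]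
      _ ≤ (∫ s in a₁..T, hkDiam x (s - τ))
          + Real.exp (2 * τ) * ∫ u in (a₁ - τ)..(T - τ), Real.exp (-(T - u)) * G u := by
          linarith [stepIII]
      _ ≤ (∫ s in a₁..T, hkDiam x (s - τ))
          + Real.exp (2 * τ) * ∫ u in m..T, Real.exp (-(T - u)) * G u := by
          have := mul_le_mul_of_nonneg_left stepV (Real.exp_pos (2 * τ)).le
          linarith
      _ ≤ (∫ s in a₁..T, hkDiam x (s - τ)) + β⁻¹ * Real.exp (2 * τ) * hkF β τ x x' T := by
          linarith [hFineq]
  -- final assembly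
  have hsplit : x j (t - τ) - x i (t - σ)
      = (x j (t - τ) - x i (t - τ)) + (x i (t - τ) - x i (t - σ)) := by abel
  calc ‖x j (t - τ) - x i (t - σ)‖
      ≤ ‖x j (t - τ) - x i (t - τ)‖ + ‖x i (t - τ) - x i (t - σ)‖ := by
        rw [hsplit]; exact norm_add_le _ _
    _ ≤ hkDiam x (t - τ) + ∫ s in a₁..T, c s := by
        apply add_le_add (hpair j i _)
        rw [norm_sub_rev]
        exact hFTC i a₁ T ha₁0.le ha₁T
    _ ≤ hkDiam x (t - τ)
        + ((∫ s in a₁..T, hkDiam x (s - τ)) + β⁻¹ * Real.exp (2 * τ) * hkF β τ x x' T) := by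
        linarith [hmain]
    _ = hkDiam x (t - τ) + (∫ s in (t - τ)..(t - σ), hkDiam x (s - τ))
        + β⁻¹ * Real.exp (2 * τ) * hkF β τ x x' (t - σ) := by
        rw [ha₁, hT]; ring
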